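/- Let b + 1 ≤ a ≤ 2b - 2 (so a > b > a - b + 1 > 1). Then the values of the irreducible characters of S_{2a+1} indexed by (a+1, b+1, 1^{a-b-1}) and by (a+1, a-b+2, 1^{b-2}) at the conjugacy class of cycle type (a, b, a-b+1) both equal 0. -/

import Mathlib

/-- The beta-set (set of first-column hook lengths) of a partition given as a
weakly decreasing list of parts. -/
def betaSet (l : List ℕ) : List ℕ :=
  l.zipIdx.map (fun p => p.1 + (l.length - 1 - p.2))

/-- Recover a partition (weakly decreasing list of positive parts) from a
list of distinct beta-numbers. -/
def fromBeta (b : List ℕ) : List ℕ :=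
  let s := List.insertionSort (· ≥ ·) b
  (s.zipIdx.map (fun p => p.1 - (s.length - 1 - p.2))).filter (fun x => x ≠ 0)

/-- `MN β γ` is the value of the irreducible character of the symmetric group
indexed by the partition `β` at the conjugacy class of cycle type `γ`,
computed via the Murnaghan–Nakayama rule (phrased in terms of beta-numbers:
removing a rim hook of length `q` replaces a beta-number `x` by `x - q`,
the sign being `(-1)` to the number of beta-numbers strictly between
`x - q` and `x`, i.e. the leg length of the hook). -/
def MN : List ℕ → List ℕ → ℤ
  | β, [] => if β = [] then 1 else 0
  | β, q :: γ =>
      ((betaSet β).map (fun x =>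
        if q ≤ x ∧ x - q ∉ betaSet β then
          (-1) ^ ((betaSet β).filter (fun y => x - q < y ∧ y < x)).length *
            MN (fromBeta ((x - q) :: (betaSet β).erase x)) γ
        else 0)).sum

/-- `l` is a partition of `m`: a weakly decreasing list of positive parts
summing to `m`. -/
def IsPartition (l : List ℕ) (m : ℕ) : Prop :=
  l.Pairwise (· ≥ ·) ∧ (∀ i ∈ l, 0 < i) ∧ l.sum = m

/-- The conjugate (transpose) partition: `(conjugate l)_i = #{j : l_j > i}`. -/
def conjugate (l : List ℕ) : List ℕ :=
  (List.range (l.foldr max 0)).map (fun i => (l.filter (fun p => i < p)).length)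

/-! ### Auxiliary machinery -/

lemma MN_nil (β : List ℕ) : MN β [] = if β = [] then 1 else 0 := rfl

lemma MN_cons (β : List ℕ) (q : ℕ) (γ : List ℕ) : MN β (q :: γ) =
      ((betaSet β).map (fun x =>
        if q ≤ x ∧ x - q ∉ betaSet β then
          (-1) ^ ((betaSet β).filter (fun y => x - q < y ∧ y < x)).length *
            MN (fromBeta ((x - q) :: (betaSet β).erase x)) γ
        else 0)).sum := rfl

/-- `desc m = [m, m-1, ..., 1]`. -/
def desc : ℕ → List ℕ
  | 0 => []
  | n+1 => (n+1) :: desc n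

@[simp] lemma desc_length (m : ℕ) : (desc m).length = m := by
  induction m with
  | zero => rfl
  | succ n ih => simp [desc, ih]

@[simp] lemma mem_desc {x m : ℕ} : x ∈ desc m ↔ 1 ≤ x ∧ x ≤ m := by
  induction m with
  | zero => simp [desc]; omega
  | succ n ih => simp [desc, ih]; omega

lemma sorted_desc (m : ℕ) : (desc m).Pairwise (· ≥ ·) := by
  induction m with
  | zero => simp [desc]
  | succ n ih =>
    rw [desc, List.pairwise_cons]
    exact ⟨fun b hb => by rw [mem_desc] at hb; omega, ih⟩

lemma sorted_desc0 (m : ℕ) : (desc m ++ [0]).Pairwise (· ≥ ·) := by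
  induction m with
  | zero => simp [desc]
  | succ n ih =>
    rw [desc, List.cons_append, List.pairwise_cons]
    refine ⟨fun b hb => ?_, ih⟩
    rcases List.mem_append.1 hb with h | h
    · rw [mem_desc] at h; omega
    · simp at h; omega

lemma L1 (m : ℕ) : ∀ n, (((desc m).zipIdx n).map (fun p => p.1 - (m + n - 1 - p.2)))
    = List.replicate m 1 := by
  induction m with
  | zero => intro n; rfl
  | succ k ih =>
    intro n
    rw [desc, List.zipIdx_cons, List.map_cons]
    have h1 : (k + 1 : ℕ) - (k + 1 + n - 1 - n) = 1 := by omega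
    have h2 : (fun p : ℕ × ℕ => p.1 - (k + 1 + n - 1 - p.2))
        = (fun p : ℕ × ℕ => p.1 - (k + (n + 1) - 1 - p.2)) := by
      funext p; omega
    rw [h1, h2, ih (n+1), List.replicate_succ]

lemma L2 (m : ℕ) : ∀ n, (((List.replicate m 1).zipIdx n).map (fun p => p.1 + (m + n - 1 - p.2)))
    = desc m := by
  induction m with
  | zero => intro n; rfl
  | succ k ih =>
    intro n
    rw [List.replicate_succ, List.zipIdx_cons, List.map_cons]
    have h1 : (1 : ℕ) + (k + 1 + n - 1 - n) = k + 1 := by omega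
    have h2 : (fun p : ℕ × ℕ => p.1 + (k + 1 + n - 1 - p.2))
        = (fun p : ℕ × ℕ => p.1 + (k + (n + 1) - 1 - p.2)) := by
      funext p; omega
    rw [h1, h2, ih (n+1), desc]

lemma L3 (m : ℕ) : ∀ n, (((desc m ++ [0]).zipIdx n).map (fun p : ℕ × ℕ => p.1 - (m + n - p.2)))
    = List.replicate (m+1) 0 := by
  induction m with
  | zero =>
    intro n
    show [(0:ℕ) - (0 + n - n)] = [0]
    simp
  | succ k ih =>
    intro n
    rw [desc, List.cons_append, List.zipIdx_cons, List.map_cons]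
    have h1 : (k + 1 : ℕ) - (k + 1 + n - n) = 0 := by omega
    have h2 : (fun p : ℕ × ℕ => p.1 - (k + 1 + n - p.2))
        = (fun p : ℕ × ℕ => p.1 - (k + (n + 1) - p.2)) := by
      funext p; omega
    rw [h1, h2, ih (n+1)]
    rfl

lemma betaSet_ccr (p q m : ℕ) : betaSet (p :: q :: List.replicate m 1)
    = (p + (m+1)) :: (q + m) :: desc m := by
  rw [betaSet]
  have hl : (p :: q :: List.replicate m 1).length = m + 2 := by simp
  rw [hl]
  rw [show (p :: q :: List.replicate m 1).zipIdx
      = (p, 0) :: (q, 1) :: (List.replicate m 1).zipIdx 2 from by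
    rw [List.zipIdx_cons, List.zipIdx_cons]]
  rw [List.map_cons, List.map_cons]
  have h0 : p + (m + 2 - 1 - 0) = p + (m+1) := by omega
  have h1 : q + (m + 2 - 1 - 1) = q + m := by omega
  rw [h0, h1, L2 m 2]

@[simp] lemma betaSet_single (x : ℕ) : betaSet [x] = [x] := by
  simp [betaSet]

lemma sortEq {L M : List ℕ} (h : L.Perm M) (hM : M.Pairwise (· ≥ ·)) :
    List.insertionSort (· ≥ ·) L = M :=
  List.Perm.eq_of_pairwise (fun _ _ _ _ h1 h2 => le_antisymm h2 h1)
    (List.pairwise_insertionSort _ L) hM ((List.perm_insertionSort _ L).trans h)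

lemma enum0 (l : List ℕ) : l.zipIdx = l.zipIdx 0 := rfl

lemma enum2 (x z : ℕ) (l : List ℕ) :
    (x :: z :: l).zipIdx = (x, 0) :: (z, 1) :: l.zipIdx 2 := by
  rw [List.zipIdx_cons, List.zipIdx_cons]

lemma FB0 (m : ℕ) : fromBeta (0 :: desc m) = [] := by
  rw [fromBeta]
  rw [sortEq (List.perm_append_singleton 0 (desc m)).symm (sorted_desc0 m)]
  have hl : (desc m ++ [0]).length = m + 1 := by simp
  rw [hl]
  have h2 : (fun p : ℕ × ℕ => p.1 - (m + 1 - 1 - p.2))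
      = (fun p : ℕ × ℕ => p.1 - (m + 0 - p.2)) := by funext p; omega
  rw [h2, enum0, L3 m 0]
  simp

lemma FB1 (y m : ℕ) (hy : m + 2 ≤ y) : fromBeta (0 :: y :: desc m) = [y - (m+1)] := by
  rw [fromBeta]
  have hperm : (0 :: y :: desc m).Perm (y :: (desc m ++ [0])) :=
    (List.Perm.swap y 0 (desc m)).trans
      (List.Perm.cons y (List.perm_append_singleton 0 (desc m)).symm)
  have hsorted : (y :: (desc m ++ [0])).Pairwise (· ≥ ·) := by
    rw [List.pairwise_cons]
    refine ⟨fun b hb => ?_, sorted_desc0 m⟩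
    rcases List.mem_append.1 hb with h | h
    · rw [mem_desc] at h; omega
    · simp at h; omega
  rw [sortEq hperm hsorted]
  have hl : (y :: (desc m ++ [0])).length = m + 2 := by simp
  rw [hl]
  rw [List.zipIdx_cons, List.map_cons]
  have h2 : (fun p : ℕ × ℕ => p.1 - (m + 2 - 1 - p.2))
      = (fun p : ℕ × ℕ => p.1 - (m + 1 - p.2)) := by funext p; omega
  rw [h2, L3 m 1]
  have h0 : y - (m + 2 - 1 - 0) = y - (m + 1) := by omega
  rw [h0]
  rw [List.filter_cons]
  simp only [List.filter_replicate]
  have : ((y - (m+1) : ℕ) ≠ 0) := by omega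
  simp [this]

lemma FB2 (y z m : ℕ) (hz : m + 1 ≤ z) (hy : z + 1 ≤ y) :
    fromBeta (z :: y :: desc m) = (y - (m+1)) :: (z - m) :: List.replicate m 1 := by
  rw [fromBeta]
  have hperm : (z :: y :: desc m).Perm (y :: z :: desc m) := List.Perm.swap y z (desc m)
  have hsorted : (y :: z :: desc m).Pairwise (· ≥ ·) := by
    rw [List.pairwise_cons, List.pairwise_cons]
    refine ⟨fun b hb => ?_, fun b hb => ?_, sorted_desc m⟩
    · rcases List.mem_cons.1 hb with h | h
      · omega
      · rw [mem_desc] at h; omega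
    · rw [mem_desc] at hb; omega
  rw [sortEq hperm hsorted]
  have hl : (y :: z :: desc m).length = m + 2 := by simp
  rw [hl]
  rw [enum2, List.map_cons, List.map_cons]
  have h0 : y - (m + 2 - 1 - 0) = y - (m + 1) := by omega
  have h1 : z - (m + 2 - 1 - 1) = z - m := by omega
  rw [h0, h1, L1 m 2]
  rw [List.filter_cons, List.filter_cons]
  simp only [List.filter_replicate]
  have e0 : ((y - (m+1) : ℕ) ≠ 0) := by omega
  have e1 : ((z - m : ℕ) ≠ 0) := by omega
  simp [e0, e1]

lemma FB3 (r : ℕ) (hr : 1 ≤ r) : fromBeta [r] = [r] := by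
  rw [fromBeta]
  rw [sortEq (List.Perm.refl [r]) (by simp)]
  have h : r ≠ 0 := by omega
  simp [List.zipIdx_cons, h]

lemma tail_sum {m q : ℕ} (h : m < q) (P : ℕ → Prop) [DecidablePred P] (G : ℕ → ℤ) :
    ((desc m).map (fun x => if q ≤ x ∧ P x then G x else 0)).sum = 0 := by
  apply List.sum_eq_zero
  intro z hz
  obtain ⟨y, hy, rfl⟩ := List.mem_map.1 hz
  rw [mem_desc] at hy
  rw [if_neg]
  rintro ⟨h1, -⟩
  omega

lemma filter_desc_nil (m lo hi : ℕ) (h : m ≤ lo) :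
    (desc m).filter (fun y => lo < y ∧ y < hi) = [] := by
  rw [List.filter_eq_nil_iff]
  intro a ha
  rw [mem_desc] at ha
  simp only [decide_eq_true_eq]
  rintro ⟨h1, -⟩
  omega

lemma filter_desc_all (m hi : ℕ) (h : m < hi) :
    (desc m).filter (fun y => 0 < y ∧ y < hi) = desc m := by
  rw [List.filter_eq_self]
  intro a ha
  rw [mem_desc] at ha
  simp only [decide_eq_true_eq]
  omega

/-! ### Character value computations -/

lemma mn_cc (c : ℕ) (hc : 1 ≤ c) : MN [c] [c] = 1 := by
  rw [MN_cons, betaSet_single]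
  simp only [List.map_cons, List.map_nil, List.sum_cons, List.sum_nil, Nat.sub_self]
  rw [if_pos (show c ≤ c ∧ (0:ℕ) ∉ [c] from
    ⟨le_rfl, by rw [List.mem_singleton]; omega⟩)]
  rw [show ([c].filter (fun y => 0 < y ∧ y < c)) = [] from by
    rw [List.filter_eq_nil_iff]; intro a ha; rw [List.mem_singleton] at ha
    simp only [decide_eq_true_eq]; omega]
  rw [List.erase_cons_head]
  have hfb : fromBeta [0] = [] := FB0 0
  rw [hfb, MN_nil, if_pos rfl]
  norm_num

lemma mn_hook (q r : ℕ) (hq : 1 ≤ q) (hr : 1 ≤ r) : MN [q + r] [q, r] = 1 := by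
  rw [MN_cons, betaSet_single]
  simp only [List.map_cons, List.map_nil, List.sum_cons, List.sum_nil,
    show q + r - q = r from by omega]
  rw [if_pos (show q ≤ q + r ∧ r ∉ [q + r] from
    ⟨by omega, by rw [List.mem_singleton]; omega⟩)]
  rw [show ([q + r].filter (fun y => r < y ∧ y < q + r)) = [] from by
    rw [List.filter_eq_nil_iff]; intro a ha; rw [List.mem_singleton] at ha
    simp only [decide_eq_true_eq]; omega]
  rw [List.erase_cons_head]
  rw [show (r :: ([] : List ℕ)) = [r] from rfl, FB3 r hr, mn_cc r hr]
  norm_num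

lemma mn_ones (m : ℕ) : MN (1 :: 1 :: List.replicate m 1) [m + 2] = (-1) ^ (m + 1) := by
  rw [MN_cons, betaSet_ccr]
  simp only [show 1 + (m + 1) = m + 2 from by omega, show 1 + m = m + 1 from by omega]
  simp only [List.map_cons, List.sum_cons, Nat.sub_self]
  rw [if_pos (show m + 2 ≤ m + 2 ∧ (0:ℕ) ∉ (m+2) :: (m+1) :: desc m from
    ⟨le_rfl, by rw [List.mem_cons, List.mem_cons, mem_desc]; omega⟩)]
  rw [if_neg (show ¬(m + 2 ≤ m + 1 ∧ (m+1) - (m+2) ∉ (m+2) :: (m+1) :: desc m) from by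
    rintro ⟨h, -⟩; omega)]
  rw [List.filter_cons, List.filter_cons]
  simp only [decide_eq_true_eq]
  rw [if_neg (show ¬(0 < m + 2 ∧ m + 2 < m + 2) from by omega)]
  rw [if_pos (show 0 < m + 1 ∧ m + 1 < m + 2 from by omega)]
  rw [filter_desc_all m (m+2) (by omega)]
  rw [List.erase_cons_head]
  have hfb := FB0 (m+1)
  simp only [desc] at hfb
  rw [hfb, MN_nil, if_pos rfl]
  rw [tail_sum (show m < m + 2 from by omega)]
  simp only [List.length_cons, desc_length]
  ring

lemma t1 (k j : ℕ) : MN ((k+j+3) :: 2 :: List.replicate k 1) [k+j+3, k+2] = (-1) ^ k := by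
  rw [MN_cons, betaSet_ccr]
  simp only [show k+j+3 + (k+1) = 2*k+j+4 from by omega, show 2 + k = k + 2 from by omega]
  simp only [List.map_cons, List.sum_cons,
    show 2*k+j+4 - (k+j+3) = k+1 from by omega]
  rw [if_pos (show k+j+3 ≤ 2*k+j+4 ∧ (k+1) ∉ (2*k+j+4) :: (k+2) :: desc k from
    ⟨by omega, by rw [List.mem_cons, List.mem_cons, mem_desc]; omega⟩)]
  rw [if_neg (show ¬(k+j+3 ≤ k+2 ∧ (k+2) - (k+j+3) ∉ (2*k+j+4) :: (k+2) :: desc k) from by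
    rintro ⟨h, -⟩; omega)]
  rw [List.filter_cons, List.filter_cons]
  simp only [decide_eq_true_eq]
  rw [if_neg (show ¬(k+1 < 2*k+j+4 ∧ 2*k+j+4 < 2*k+j+4) from by omega)]
  rw [if_pos (show k+1 < k+2 ∧ k+2 < 2*k+j+4 from by omega)]
  rw [filter_desc_nil k (k+1) (2*k+j+4) (by omega)]
  rw [List.erase_cons_head]
  rw [FB2 (k+2) (k+1) k (by omega) (by omega)]
  simp only [show k+2 - (k+1) = 1 from by omega, show k+1 - k = 1 from by omega]
  rw [mn_ones k]
  rw [tail_sum (show k < k+j+3 from by omega)]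
  simp only [List.length_cons, List.length_nil]
  ring

lemma u1 (k j : ℕ) :
    MN ((k+2) :: 2 :: List.replicate (k+j+1) 1) [k+j+3, k+2] = (-1) ^ (k+j+1) := by
  rw [MN_cons, betaSet_ccr]
  simp only [show k+2 + (k+j+1+1) = 2*k+j+4 from by omega,
    show 2 + (k+j+1) = k+j+3 from by omega]
  simp only [List.map_cons, List.sum_cons,
    show 2*k+j+4 - (k+j+3) = k+1 from by omega, Nat.sub_self]
  rw [if_neg (show ¬(k+j+3 ≤ 2*k+j+4 ∧ (k+1) ∉ (2*k+j+4) :: (k+j+3) :: desc (k+j+1)) from by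
    rintro ⟨-, hn⟩
    exact hn (by rw [List.mem_cons, List.mem_cons, mem_desc]; omega))]
  rw [if_pos (show k+j+3 ≤ k+j+3 ∧ (0:ℕ) ∉ (2*k+j+4) :: (k+j+3) :: desc (k+j+1) from
    ⟨le_rfl, by rw [List.mem_cons, List.mem_cons, mem_desc]; omega⟩)]
  rw [List.filter_cons, List.filter_cons]
  simp only [decide_eq_true_eq]
  rw [if_neg (show ¬(0 < 2*k+j+4 ∧ 2*k+j+4 < k+j+3) from by omega)]
  rw [if_neg (show ¬(0 < k+j+3 ∧ k+j+3 < k+j+3) from by omega)]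
  rw [filter_desc_all (k+j+1) (k+j+3) (by omega)]
  rw [List.erase_cons_tail (by simp only [beq_iff_eq]; omega), List.erase_cons_head]
  rw [FB1 (2*k+j+4) (k+j+1) (by omega)]
  simp only [show 2*k+j+4 - (k+j+1+1) = k+2 from by omega]
  rw [mn_cc (k+2) (by omega)]
  rw [tail_sum (show k+j+1 < k+j+3 from by omega)]
  simp only [desc_length]
  ring

lemma p1 (k j : ℕ) :
    MN ((2*k+j+5) :: (k+j+4) :: List.replicate k 1) [2*k+j+4, k+j+3, k+2] = 0 := by
  rw [MN_cons, betaSet_ccr]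
  simp only [show 2*k+j+5 + (k+1) = 3*k+j+6 from by omega,
    show k+j+4 + k = 2*k+j+4 from by omega]
  simp only [List.map_cons, List.sum_cons,
    show 3*k+j+6 - (2*k+j+4) = k+2 from by omega, Nat.sub_self]
  rw [if_pos (show 2*k+j+4 ≤ 3*k+j+6 ∧ (k+2) ∉ (3*k+j+6) :: (2*k+j+4) :: desc k from
    ⟨by omega, by rw [List.mem_cons, List.mem_cons, mem_desc]; omega⟩)]
  rw [if_pos (show 2*k+j+4 ≤ 2*k+j+4 ∧ (0:ℕ) ∉ (3*k+j+6) :: (2*k+j+4) :: desc k from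
    ⟨le_rfl, by rw [List.mem_cons, List.mem_cons, mem_desc]; omega⟩)]
  rw [List.filter_cons, List.filter_cons, List.filter_cons, List.filter_cons]
  simp only [decide_eq_true_eq]
  rw [if_neg (show ¬(k+2 < 3*k+j+6 ∧ 3*k+j+6 < 3*k+j+6) from by omega)]
  rw [if_pos (show k+2 < 2*k+j+4 ∧ 2*k+j+4 < 3*k+j+6 from by omega)]
  rw [filter_desc_nil k (k+2) (3*k+j+6) (by omega)]
  rw [if_neg (show ¬(0 < 3*k+j+6 ∧ 3*k+j+6 < 2*k+j+4) from by omega)]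
  rw [if_neg (show ¬(0 < 2*k+j+4 ∧ 2*k+j+4 < 2*k+j+4) from by omega)]
  rw [filter_desc_all k (2*k+j+4) (by omega)]
  rw [List.erase_cons_head]
  rw [List.erase_cons_tail (by simp only [beq_iff_eq]; omega), List.erase_cons_head]
  rw [FB2 (2*k+j+4) (k+2) k (by omega) (by omega)]
  simp only [show 2*k+j+4 - (k+1) = k+j+3 from by omega, show k+2 - k = 2 from by omega]
  rw [t1 k j]
  rw [FB1 (3*k+j+6) k (by omega)]
  simp only [show 3*k+j+6 - (k+1) = k+j+3 + (k+2) from by omega]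
  rw [mn_hook (k+j+3) (k+2) (by omega) (by omega)]
  rw [tail_sum (show k < 2*k+j+4 from by omega)]
  simp only [List.length_cons, List.length_nil, desc_length]
  ring

lemma p2 (k j : ℕ) :
    MN ((2*k+j+5) :: (k+3) :: List.replicate (k+j+1) 1) [2*k+j+4, k+j+3, k+2] = 0 := by
  rw [MN_cons, betaSet_ccr]
  simp only [show 2*k+j+5 + (k+j+1+1) = 3*k+2*j+7 from by omega,
    show k+3 + (k+j+1) = 2*k+j+4 from by omega]
  simp only [List.map_cons, List.sum_cons,
    show 3*k+2*j+7 - (2*k+j+4) = k+j+3 from by omega, Nat.sub_self]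
  rw [if_pos (show 2*k+j+4 ≤ 3*k+2*j+7 ∧ (k+j+3) ∉ (3*k+2*j+7) :: (2*k+j+4) :: desc (k+j+1) from
    ⟨by omega, by rw [List.mem_cons, List.mem_cons, mem_desc]; omega⟩)]
  rw [if_pos (show 2*k+j+4 ≤ 2*k+j+4 ∧ (0:ℕ) ∉ (3*k+2*j+7) :: (2*k+j+4) :: desc (k+j+1) from
    ⟨le_rfl, by rw [List.mem_cons, List.mem_cons, mem_desc]; omega⟩)]
  rw [List.filter_cons, List.filter_cons, List.filter_cons, List.filter_cons]
  simp only [decide_eq_true_eq]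
  rw [if_neg (show ¬(k+j+3 < 3*k+2*j+7 ∧ 3*k+2*j+7 < 3*k+2*j+7) from by omega)]
  rw [if_pos (show k+j+3 < 2*k+j+4 ∧ 2*k+j+4 < 3*k+2*j+7 from by omega)]
  rw [filter_desc_nil (k+j+1) (k+j+3) (3*k+2*j+7) (by omega)]
  rw [if_neg (show ¬(0 < 3*k+2*j+7 ∧ 3*k+2*j+7 < 2*k+j+4) from by omega)]
  rw [if_neg (show ¬(0 < 2*k+j+4 ∧ 2*k+j+4 < 2*k+j+4) from by omega)]
  rw [filter_desc_all (k+j+1) (2*k+j+4) (by omega)]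
  rw [List.erase_cons_head]
  rw [List.erase_cons_tail (by simp only [beq_iff_eq]; omega), List.erase_cons_head]
  rw [FB2 (2*k+j+4) (k+j+3) (k+j+1) (by omega) (by omega)]
  simp only [show 2*k+j+4 - (k+j+1+1) = k+2 from by omega,
    show k+j+3 - (k+j+1) = 2 from by omega]
  rw [u1 k j]
  rw [FB1 (3*k+2*j+7) (k+j+1) (by omega)]
  simp only [show 3*k+2*j+7 - (k+j+1+1) = k+j+3 + (k+2) from by omega]
  rw [mn_hook (k+j+3) (k+2) (by omega) (by omega)]
  rw [tail_sum (show k+j+1 < 2*k+j+4 from by omega)]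
  simp only [List.length_cons, List.length_nil, desc_length]
  ring

/-- For `b + 1 ≤ a ≤ 2b - 2`, the irreducible characters of `S_{2a+1}`
indexed by `(a+1, b+1, 1^{a-b-1})` and by `(a+1, a-b+2, 1^{b-2})` both vanish
at the class of cycle type `(a, b, a-b+1)`. -/
theorem stmt_15 (a b : ℕ) (h1 : b + 1 ≤ a) (h2 : a ≤ 2 * b - 2) :
    MN ((a + 1) :: (b + 1) :: List.replicate (a - b - 1) 1) [a, b, a - b + 1] = 0 ∧
    MN ((a + 1) :: (a - b + 2) :: List.replicate (b - 2) 1) [a, b, a - b + 1] = 0 := by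
  obtain ⟨k, j, hb, ha⟩ : ∃ k j, b = k + j + 3 ∧ a = 2*k + j + 4 :=
    ⟨a - b - 1, 2*b - a - 2, by omega, by omega⟩
  subst hb ha
  rw [show 2*k+j+4 - (k+j+3) - 1 = k from by omega,
    show 2*k+j+4 - (k+j+3) + 1 = k+2 from by omega,
    show 2*k+j+4 - (k+j+3) + 2 = k+3 from by omega,
    show 2*k+j+4 + 1 = 2*k+j+5 from by omega,
    show k+j+3 + 1 = k+j+4 from by omega,
    show k+j+3 - 2 = k+j+1 from by omega]
  exact ⟨p1 k j, p2 k j⟩
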